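/- The algebra H generated by p_i, q_i (i ≥ 1) with relations p_i p_j = p_j p_i, q_i q_j = q_j q_i, p_i q_j = q_j p_i + δ_{ij}·1 is isomorphic to the algebra H' generated by a_i, b_i (i ≥ 1, a_0 = b_0 = 1) with relations a_i a_j = a_j a_i, b_i b_j = b_j b_i, a_i b_j = Σ_{k=0}^{min(i,j)} b_{j−k} a_{i−k}. -/

import Mathlib

open FreeAlgebra

/-- Generators `p_i`, `q_i` (`i ≥ 1`) of the Heisenberg algebra `H`. -/
abbrev HGen := ℕ+ ⊕ ℕ+

noncomputable def pGen (i : ℕ+) : FreeAlgebra ℂ HGen := ι ℂ (Sum.inl i)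
noncomputable def qGen (i : ℕ+) : FreeAlgebra ℂ HGen := ι ℂ (Sum.inr i)

/-- The defining relations of `H`: `p_i p_j = p_j p_i`, `q_i q_j = q_j q_i`,
`p_i q_j = q_j p_i + δ_{ij}·1`. -/
inductive relH : FreeAlgebra ℂ HGen → FreeAlgebra ℂ HGen → Prop
  | pp (i j : ℕ+) : relH (pGen i * pGen j) (pGen j * pGen i)
  | qq (i j : ℕ+) : relH (qGen i * qGen j) (qGen j * qGen i)
  | pq (i j : ℕ+) :
      relH (pGen i * qGen j) (qGen j * pGen i + if i = j then 1 else 0)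

/-- Generators `a_i`, `b_i` (`i ≥ 1`) of `H'`. -/
abbrev HpGen := ℕ+ ⊕ ℕ+

/-- `a_n` for `n : ℕ`, with the convention `a_0 = 1`. -/
noncomputable def aGen (n : ℕ) : FreeAlgebra ℂ HpGen :=
  if h : 0 < n then ι ℂ (Sum.inl (⟨n, h⟩ : ℕ+)) else 1

/-- `b_n` for `n : ℕ`, with the convention `b_0 = 1`. -/
noncomputable def bGen (n : ℕ) : FreeAlgebra ℂ HpGen :=
  if h : 0 < n then ι ℂ (Sum.inr (⟨n, h⟩ : ℕ+)) else 1

/-- The defining relations of `H'`: `a_i a_j = a_j a_i`, `b_i b_j = b_j b_i`,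
`a_i b_j = Σ_{k=0}^{min(i,j)} b_{j-k} a_{i-k}` (with `a_0 = b_0 = 1`). -/
inductive relHp : FreeAlgebra ℂ HpGen → FreeAlgebra ℂ HpGen → Prop
  | aa (i j : ℕ+) : relHp (aGen i * aGen j) (aGen j * aGen i)
  | bb (i j : ℕ+) : relHp (bGen i * bGen j) (bGen j * bGen i)
  | ab (i j : ℕ+) :
      relHp (aGen i * bGen j)
        (∑ k ∈ Finset.range (min (i : ℕ) (j : ℕ) + 1),
          bGen ((j : ℕ) - k) * aGen ((i : ℕ) - k))


namespace HeisenAux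

noncomputable section

open Finset

abbrev HA := RingQuot relH
abbrev HB := RingQuot relHp

/-! ### The `H` side -/

noncomputable def pg (i : ℕ+) : HA := RingQuot.mkAlgHom ℂ relH (pGen i)
noncomputable def qg (i : ℕ+) : HA := RingQuot.mkAlgHom ℂ relH (qGen i)

noncomputable def pS (k : ℕ) : HA := pg ⟨k + 1, Nat.succ_pos k⟩
noncomputable def qS (k : ℕ) : HA := qg ⟨k + 1, Nat.succ_pos k⟩

lemma pg_comm (i j : ℕ+) : pg i * pg j = pg j * pg i := by
  simp only [pg, ← map_mul]
  exact RingQuot.mkAlgHom_rel ℂ (relH.pp i j)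

lemma qg_comm (i j : ℕ+) : qg i * qg j = qg j * qg i := by
  simp only [qg, ← map_mul]
  exact RingQuot.mkAlgHom_rel ℂ (relH.qq i j)

lemma pq_rel (i j : ℕ+) : pg i * qg j = qg j * pg i + if i = j then 1 else 0 := by
  have := RingQuot.mkAlgHom_rel ℂ (relH.pq i j)
  simp only [map_add, map_mul, apply_ite (RingQuot.mkAlgHom ℂ relH), map_one, map_zero] at this
  simpa [pg, qg] using this

lemma pS_qS (i k : ℕ) : pS i * qS k = qS k * pS i + if i = k then 1 else 0 := by
  have := pq_rel ⟨i + 1, Nat.succ_pos i⟩ ⟨k + 1, Nat.succ_pos k⟩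
  simp only [pS, qS] at this ⊢
  rw [this]
  by_cases h : i = k
  · subst h; simp; exact fun hh => absurd rfl hh
  · rw [if_neg (fun hh => h (by simpa using congrArg Subtype.val hh)), if_neg h]


/-- `A n` : complete-homogeneous-style elements built from the `p`'s. -/
noncomputable def Aelt : ℕ → HA
  | 0 => 1
  | n + 1 =>
      (((n : ℂ) + 1))⁻¹ • ∑ k ∈ range (n + 1), pS k * Aelt (n - k)
  decreasing_by exact Nat.lt_succ_of_le (Nat.sub_le n k)

/-- `B n` : built from the `q`'s. -/
noncomputable def Belt : ℕ → HA
  | 0 => 1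
  | n + 1 =>
      (((n : ℂ) + 1))⁻¹ • ∑ k ∈ range (n + 1), ((k : ℂ) + 1) • (qS k * Belt (n - k))
  decreasing_by exact Nat.lt_succ_of_le (Nat.sub_le n k)

@[simp] lemma Aelt_zero : Aelt 0 = 1 := by rw [Aelt]
@[simp] lemma Belt_zero : Belt 0 = 1 := by rw [Belt]

lemma cast_succ_ne_zero (n : ℕ) : ((n : ℂ) + 1) ≠ 0 := by
  intro h
  have h2 : ((n + 1 : ℕ) : ℂ) = 0 := by push_cast; exact h
  exact Nat.cast_ne_zero.mpr (Nat.succ_ne_zero n) h2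

lemma pg_commute (i j : ℕ+) : Commute (pg i) (pg j) := pg_comm i j
lemma qg_commute (i j : ℕ+) : Commute (qg i) (qg j) := qg_comm i j

lemma newtonA (n : ℕ) :
    ∑ k ∈ range (n + 1), pS k * Aelt (n - k) = ((n : ℂ) + 1) • Aelt (n + 1) := by
  rw [Aelt, smul_smul, mul_inv_cancel₀ (cast_succ_ne_zero n), one_smul]

lemma newtonB (n : ℕ) :
    ∑ k ∈ range (n + 1), ((k : ℂ) + 1) • (qS k * Belt (n - k))
      = ((n : ℂ) + 1) • Belt (n + 1) := by
  rw [Belt, smul_smul, mul_inv_cancel₀ (cast_succ_ne_zero n), one_smul]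

lemma newtonA' (n : ℕ) :
    ∑ k ∈ range n, pS k * Aelt (n - 1 - k) = (n : ℂ) • Aelt n := by
  cases n with
  | zero => simp
  | succ m => simpa using newtonA m

lemma pS_Aelt (i : ℕ) : ∀ n, Commute (pS i) (Aelt n) := by
  intro n
  induction n using Nat.strong_induction_on with
  | _ n ih =>
    match n with
    | 0 => simpa using Commute.one_right (pS i)
    | n + 1 =>
      rw [Aelt]
      apply Commute.smul_right
      apply Commute.sum_right
      intro k _
      exact (pg_commute _ _).mul_right (ih (n - k) (Nat.lt_succ_of_le (Nat.sub_le n k)))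

lemma Aelt_Aelt (m : ℕ) : ∀ n, Commute (Aelt m) (Aelt n) := by
  induction m using Nat.strong_induction_on with
  | _ m ih =>
    intro n
    match m with
    | 0 => simpa using Commute.one_left (Aelt n)
    | m + 1 =>
      rw [Aelt]
      apply Commute.smul_left
      apply Commute.sum_left
      intro k _
      exact (pS_Aelt k n).mul_left ((ih (m - k) (Nat.lt_succ_of_le (Nat.sub_le m k))) n)

lemma qS_Belt (i : ℕ) : ∀ n, Commute (qS i) (Belt n) := by
  intro n
  induction n using Nat.strong_induction_on with
  | _ n ih =>
    match n with
    | 0 => simpa using Commute.one_right (qS i)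
    | n + 1 =>
      rw [Belt]
      apply Commute.smul_right
      apply Commute.sum_right
      intro k _
      apply Commute.smul_right
      exact (qg_commute _ _).mul_right (ih (n - k) (Nat.lt_succ_of_le (Nat.sub_le n k)))

lemma Belt_Belt (m : ℕ) : ∀ n, Commute (Belt m) (Belt n) := by
  induction m using Nat.strong_induction_on with
  | _ m ih =>
    intro n
    match m with
    | 0 => simpa using Commute.one_left (Belt n)
    | m + 1 =>
      rw [Belt]
      apply Commute.smul_left
      apply Commute.sum_left
      intro k _
      apply Commute.smul_left
      exact (qS_Belt k n).mul_left ((ih (m - k) (Nat.lt_succ_of_le (Nat.sub_le m k))) n)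

lemma pS_Belt_rel (i : ℕ) : ∀ m : ℕ,
    pS i * Belt m = Belt m * pS i + (if i + 1 ≤ m then Belt (m - (i + 1)) else 0) := by
  intro m
  induction m using Nat.strong_induction_on with
  | _ m ih =>
    match m with
    | 0 => simp
    | n + 1 =>
      have key : ((n : ℂ) + 1) • (pS i * Belt (n + 1))
          = ((n : ℂ) + 1) • (Belt (n + 1) * pS i
              + (if i + 1 ≤ n + 1 then Belt ((n + 1) - (i + 1)) else 0)) := by
        have hpt : ∀ k ∈ range (n + 1),
            ((k : ℂ) + 1) • (pS i * (qS k * Belt (n - k)))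
              = ((k : ℂ) + 1) • (qS k * (Belt (n - k) * pS i))
                + ((k : ℂ) + 1) • (qS k *
                    (if i + 1 ≤ n - k then Belt ((n - k) - (i + 1)) else 0))
                + ((k : ℂ) + 1) • ((if i = k then (1 : HA) else 0) * Belt (n - k)) := by
          intro k hk
          rw [← mul_assoc, pS_qS, add_mul, mul_assoc,
            ih (n - k) (Nat.lt_succ_of_le (Nat.sub_le n k)), mul_add, smul_add, smul_add]
        have hS1 : ∑ k ∈ range (n + 1), ((k : ℂ) + 1) • (qS k * (Belt (n - k) * pS i))
            = (((n : ℂ) + 1) • Belt (n + 1)) * pS i := by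
          rw [← newtonB n, Finset.sum_mul]
          exact Finset.sum_congr rfl fun k _ => by rw [smul_mul_assoc, mul_assoc]
        have hS2 : ∑ k ∈ range (n + 1), ((k : ℂ) + 1) • (qS k *
              (if i + 1 ≤ n - k then Belt ((n - k) - (i + 1)) else 0))
            = if i + 1 ≤ n then (((n - (i + 1) : ℕ) : ℂ) + 1) • Belt ((n - (i + 1)) + 1)
              else 0 := by
          by_cases hin : i + 1 ≤ n
          · rw [if_pos hin, ← newtonB (n - (i + 1))]
            rw [← Finset.sum_subset (Finset.range_subset_range.mpr (by omega) :
                range (n - (i + 1) + 1) ⊆ range (n + 1))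
              (fun x _ hx => by
                rw [if_neg (by simp at hx ⊢; omega), mul_zero, smul_zero])]
            refine Finset.sum_congr rfl fun k hk => ?_
            simp only [Finset.mem_range] at hk
            have hg : i + 1 ≤ n - k := by omega
            rw [if_pos hg, show (n - k) - (i + 1) = (n - (i + 1)) - k from by omega]
          · rw [if_neg hin]
            apply Finset.sum_eq_zero
            intro k hk
            rw [if_neg (by omega), mul_zero, smul_zero]
        have hS3 : ∑ k ∈ range (n + 1),
              ((k : ℂ) + 1) • ((if i = k then (1 : HA) else 0) * Belt (n - k))
            = if i ≤ n then ((i : ℂ) + 1) • Belt (n - i) else 0 := by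
          simp only [ite_mul, one_mul, zero_mul, smul_ite, smul_zero]
          rw [Finset.sum_ite_eq]
          simp [Nat.lt_succ_iff]
        calc ((n : ℂ) + 1) • (pS i * Belt (n + 1))
            = pS i * (((n : ℂ) + 1) • Belt (n + 1)) := (mul_smul_comm _ _ _).symm
          _ = ∑ k ∈ range (n + 1), ((k : ℂ) + 1) • (pS i * (qS k * Belt (n - k))) := by
              rw [← newtonB n, Finset.mul_sum]
              exact Finset.sum_congr rfl fun k _ => mul_smul_comm _ _ _
          _ = (((n : ℂ) + 1) • Belt (n + 1)) * pS i
              + ((if i + 1 ≤ n then (((n - (i + 1) : ℕ) : ℂ) + 1) • Belt ((n - (i + 1)) + 1)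
                  else 0)
                + (if i ≤ n then ((i : ℂ) + 1) • Belt (n - i) else 0)) := by
              rw [Finset.sum_congr rfl hpt, Finset.sum_add_distrib, Finset.sum_add_distrib,
                hS1, hS2, hS3, add_assoc]
          _ = ((n : ℂ) + 1) • (Belt (n + 1) * pS i
              + (if i + 1 ≤ n + 1 then Belt ((n + 1) - (i + 1)) else 0)) := by
              rw [smul_add, smul_mul_assoc]
              congr 1
              by_cases h1 : i + 1 ≤ n
              · have e1 : (n - (i + 1)) + 1 = n - i := by omega
                have e2 : (n + 1) - (i + 1) = n - i := by omega
                rw [if_pos h1, if_pos (show i ≤ n by omega),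
                  if_pos (show i + 1 ≤ n + 1 by omega), e1, e2, ← add_smul]
                congr 1
                have : ((n - (i + 1) : ℕ) : ℂ) = (n : ℂ) - (i : ℂ) - 1 := by
                  push_cast [Nat.cast_sub h1]
                  ring
                rw [this]
                ring
              · by_cases h2 : i ≤ n
                · have : i = n := by omega
                  subst this
                  simp
                · rw [if_neg h1, if_neg h2, if_neg (by omega)]
                  simp
      have := congrArg (fun x : HA => (((n : ℂ) + 1))⁻¹ • x) key
      simpa [smul_smul, inv_mul_cancel₀ (cast_succ_ne_zero n)] using this

lemma AB_sum : ∀ i j : ℕ,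
    Aelt i * Belt j = ∑ k ∈ range (min i j + 1), Belt (j - k) * Aelt (i - k) := by
  intro i
  induction i using Nat.strong_induction_on with
  | _ i ih =>
    intro j
    match i with
    | 0 => simp
    | n + 1 =>
      match j with
      | 0 => simp
      | m + 1 =>
        have hcomm : ∀ t, t ≤ n → ∀ m' : ℕ,
            Aelt t * Belt (m' + 1) = Belt (m' + 1) * Aelt t
              + (if t = 0 then 0 else Aelt (t - 1) * Belt m') := by
          intro t ht m'
          match t with
          | 0 => simp
          | t + 1 =>
            rw [ih (t + 1) (by omega) (m' + 1), Nat.succ_min_succ, Finset.sum_range_succ']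
            simp only [Nat.succ_sub_succ, Nat.sub_zero]
            rw [← ih t (by omega) m']
            simp [add_comm]
        have hGA : ∑ k ∈ range (n + 1), (if k ≤ m then Belt (m - k) else 0) * Aelt (n - k)
            = Aelt n * Belt m := by
          rw [ih n (by omega) m,
            ← Finset.sum_subset (Finset.range_subset_range.mpr (by omega) :
                range (min n m + 1) ⊆ range (n + 1))
              (fun x hxx hx => by
                rw [if_neg (fun hc => by simp at hx hxx; omega), zero_mul])]
          exact Finset.sum_congr rfl fun k hk => by
            rw [if_pos (by simp at hk; omega)]
        have hPB : ∑ k ∈ range (n + 1),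
              pS k * (if n - k = 0 then 0 else Aelt (n - k - 1) * Belt m)
            = (n : ℂ) • (Aelt n * Belt m) := by
          rw [Finset.sum_range_succ, if_pos (Nat.sub_self n), mul_zero, add_zero]
          have hptw : ∀ k ∈ range n,
              pS k * (if n - k = 0 then 0 else Aelt (n - k - 1) * Belt m)
                = (pS k * Aelt (n - 1 - k)) * Belt m := by
            intro k hk
            simp only [Finset.mem_range] at hk
            rw [if_neg (by omega), ← mul_assoc,
              show n - k - 1 = n - 1 - k from by omega]
          rw [Finset.sum_congr rfl hptw, ← Finset.sum_mul, newtonA' n, smul_mul_assoc]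
        have key : ((n : ℂ) + 1) • (Aelt (n + 1) * Belt (m + 1))
            = ((n : ℂ) + 1) • (Belt (m + 1) * Aelt (n + 1) + Aelt n * Belt m) := by
          calc ((n : ℂ) + 1) • (Aelt (n + 1) * Belt (m + 1))
              = (∑ k ∈ range (n + 1), pS k * Aelt (n - k)) * Belt (m + 1) := by
                rw [← smul_mul_assoc, ← newtonA n]
            _ = ∑ k ∈ range (n + 1), pS k * (Aelt (n - k) * Belt (m + 1)) := by
                rw [Finset.sum_mul]
                exact Finset.sum_congr rfl fun k _ => mul_assoc _ _ _
            _ = ∑ k ∈ range (n + 1),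
                  (Belt (m + 1) * (pS k * Aelt (n - k))
                    + (if k ≤ m then Belt (m - k) else 0) * Aelt (n - k)
                    + pS k * (if n - k = 0 then 0 else Aelt (n - k - 1) * Belt m)) := by
                refine Finset.sum_congr rfl fun k _ => ?_
                rw [hcomm (n - k) (Nat.sub_le n k) m, mul_add, ← mul_assoc,
                  pS_Belt_rel k (m + 1)]
                simp only [Nat.succ_sub_succ, Nat.add_le_add_iff_right]
                rw [add_mul, mul_assoc]
            _ = Belt (m + 1) * (((n : ℂ) + 1) • Aelt (n + 1)) + Aelt n * Belt m
                  + (n : ℂ) • (Aelt n * Belt m) := by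
                rw [Finset.sum_add_distrib, Finset.sum_add_distrib, hGA, hPB,
                  ← Finset.mul_sum, newtonA n]
            _ = ((n : ℂ) + 1) • (Belt (m + 1) * Aelt (n + 1) + Aelt n * Belt m) := by
                rw [mul_smul_comm, smul_add, add_assoc]
                congr 1
                rw [add_smul, one_smul, add_comm]
        have hAB : Aelt (n + 1) * Belt (m + 1)
            = Belt (m + 1) * Aelt (n + 1) + Aelt n * Belt m := by
          have := congrArg (fun x : HA => (((n : ℂ) + 1))⁻¹ • x) key
          simpa [smul_smul, inv_mul_cancel₀ (cast_succ_ne_zero n)] using this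
        rw [Nat.succ_min_succ, Finset.sum_range_succ']
        simp only [Nat.succ_sub_succ, Nat.sub_zero]
        rw [hAB, ← ih n (by omega) m, add_comm]

/-! ### The `H'` side -/

noncomputable def ag (n : ℕ) : HB := RingQuot.mkAlgHom ℂ relHp (aGen n)
noncomputable def bg (n : ℕ) : HB := RingQuot.mkAlgHom ℂ relHp (bGen n)

@[simp] lemma ag_zero : ag 0 = 1 := by
  rw [ag, aGen]; simp
@[simp] lemma bg_zero : bg 0 = 1 := by
  rw [bg, bGen]; simp

lemma ag_comm (i j : ℕ) : ag i * ag j = ag j * ag i := by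
  match i, j with
  | 0, j => simp
  | i + 1, 0 => simp
  | i + 1, j + 1 =>
    have := RingQuot.mkAlgHom_rel ℂ (relHp.aa ⟨i + 1, Nat.succ_pos i⟩ ⟨j + 1, Nat.succ_pos j⟩)
    simp only [map_mul] at this
    exact this

lemma bg_comm (i j : ℕ) : bg i * bg j = bg j * bg i := by
  match i, j with
  | 0, j => simp
  | i + 1, 0 => simp
  | i + 1, j + 1 =>
    have := RingQuot.mkAlgHom_rel ℂ (relHp.bb ⟨i + 1, Nat.succ_pos i⟩ ⟨j + 1, Nat.succ_pos j⟩)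
    simp only [map_mul] at this
    exact this

lemma ag_commute (i j : ℕ) : Commute (ag i) (ag j) := ag_comm i j
lemma bg_commute (i j : ℕ) : Commute (bg i) (bg j) := bg_comm i j

lemma ab_sum_HB : ∀ i j : ℕ,
    ag i * bg j = ∑ k ∈ range (min i j + 1), bg (j - k) * ag (i - k) := by
  intro i j
  match i, j with
  | 0, j => simp
  | i + 1, 0 => simp
  | i + 1, j + 1 =>
    have := RingQuot.mkAlgHom_rel ℂ (relHp.ab ⟨i + 1, Nat.succ_pos i⟩ ⟨j + 1, Nat.succ_pos j⟩)
    simp only [map_mul, map_sum] at this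
    exact this

lemma ab1_HB (i j : ℕ) :
    ag (i + 1) * bg (j + 1) = bg (j + 1) * ag (i + 1) + ag i * bg j := by
  rw [ab_sum_HB (i + 1) (j + 1), Nat.succ_min_succ, Finset.sum_range_succ']
  simp only [Nat.succ_sub_succ, Nat.sub_zero]
  rw [← ab_sum_HB i j, add_comm]

lemma ab1_HB' (t m : ℕ) :
    ag t * bg (m + 1) = bg (m + 1) * ag t + (if t = 0 then 0 else ag (t - 1) * bg m) := by
  match t with
  | 0 => simp
  | t + 1 => simpa using ab1_HB t m

noncomputable def Pelt : ℕ → HB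
  | 0 => 0
  | n + 1 => ((n : ℂ) + 1) • ag (n + 1) - ∑ k ∈ range n, Pelt (n - k) * ag (k + 1)
  decreasing_by exact Nat.lt_succ_of_le (Nat.sub_le n k)

noncomputable def Qelt : ℕ → HB
  | 0 => 0
  | n + 1 => bg (n + 1) - ((n : ℂ) + 1)⁻¹ •
      ∑ k ∈ range n, ((n - k : ℕ) : ℂ) • (Qelt (n - k) * bg (k + 1))
  decreasing_by exact Nat.lt_succ_of_le (Nat.sub_le n k)

lemma Pelt_succ (n : ℕ) :
    Pelt (n + 1) = ((n : ℂ) + 1) • ag (n + 1) - ∑ k ∈ range n, Pelt (k + 1) * ag (n - k) := by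
  rw [Pelt]
  congr 1
  rw [← Finset.sum_range_reflect]
  refine Finset.sum_congr rfl fun k hk => ?_
  simp only [Finset.mem_range] at hk
  rw [show n - 1 - k + 1 = n - k from by omega, show n - (n - 1 - k) = k + 1 from by omega]

lemma Qelt_succ (n : ℕ) :
    Qelt (n + 1) = bg (n + 1) - ((n : ℂ) + 1)⁻¹ •
      ∑ k ∈ range n, ((k : ℂ) + 1) • (Qelt (k + 1) * bg (n - k)) := by
  rw [Qelt]
  congr 2
  rw [← Finset.sum_range_reflect]
  refine Finset.sum_congr rfl fun k hk => ?_
  simp only [Finset.mem_range] at hk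
  rw [show n - 1 - k + 1 = n - k from by omega, show n - (n - 1 - k) = k + 1 from by omega]
  congr 1
  push_cast
  ring

@[simp] lemma Pelt_zero : Pelt 0 = 0 := by rw [Pelt]
@[simp] lemma Qelt_zero : Qelt 0 = 0 := by rw [Qelt]

lemma newtonP (n : ℕ) :
    ∑ k ∈ range (n + 1), Pelt (k + 1) * ag (n - k) = ((n : ℂ) + 1) • ag (n + 1) := by
  rw [Finset.sum_range_succ, Nat.sub_self, ag_zero, mul_one, Pelt_succ]
  abel

lemma newtonP' (n : ℕ) :
    ∑ k ∈ range n, Pelt (k + 1) * ag (n - 1 - k) = (n : ℂ) • ag n := by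
  cases n with
  | zero => simp
  | succ m => simpa using newtonP m

lemma newtonQ (n : ℕ) :
    ∑ k ∈ range (n + 1), ((k : ℂ) + 1) • (Qelt (k + 1) * bg (n - k))
      = ((n : ℂ) + 1) • bg (n + 1) := by
  rw [Finset.sum_range_succ, Nat.sub_self, bg_zero, mul_one, Qelt_succ, smul_sub,
    smul_smul, mul_inv_cancel₀ (cast_succ_ne_zero n), one_smul]
  abel

lemma ag_Pelt (i : ℕ) : ∀ n, Commute (ag i) (Pelt n) := by
  intro n
  induction n using Nat.strong_induction_on with
  | _ n ih =>
    match n with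
    | 0 => rw [Pelt_zero]; exact Commute.zero_right _
    | n + 1 =>
      rw [Pelt]
      apply Commute.sub_right
      · exact Commute.smul_right (ag_commute i (n + 1)) _
      · apply Commute.sum_right
        intro k _
        exact (ih (n - k) (Nat.lt_succ_of_le (Nat.sub_le n k))).mul_right (ag_commute _ _)

lemma Pelt_Pelt (m : ℕ) : ∀ n, Commute (Pelt m) (Pelt n) := by
  induction m using Nat.strong_induction_on with
  | _ m ih =>
    intro n
    match m with
    | 0 => rw [Pelt_zero]; exact Commute.zero_left _
    | m + 1 =>
      rw [Pelt]
      apply Commute.sub_left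
      · exact Commute.smul_left (ag_Pelt (m + 1) n) _
      · apply Commute.sum_left
        intro k _
        exact (ih (m - k) (Nat.lt_succ_of_le (Nat.sub_le m k)) n).mul_left (ag_Pelt _ _)

lemma bg_Qelt (i : ℕ) : ∀ n, Commute (bg i) (Qelt n) := by
  intro n
  induction n using Nat.strong_induction_on with
  | _ n ih =>
    match n with
    | 0 => rw [Qelt_zero]; exact Commute.zero_right _
    | n + 1 =>
      rw [Qelt]
      apply Commute.sub_right
      · exact bg_commute i (n + 1)
      · apply Commute.smul_right
        apply Commute.sum_right
        intro k _
        apply Commute.smul_right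
        exact (ih (n - k) (Nat.lt_succ_of_le (Nat.sub_le n k))).mul_right (bg_commute _ _)

lemma Qelt_Qelt (m : ℕ) : ∀ n, Commute (Qelt m) (Qelt n) := by
  induction m using Nat.strong_induction_on with
  | _ m ih =>
    intro n
    match m with
    | 0 => rw [Qelt_zero]; exact Commute.zero_left _
    | m + 1 =>
      rw [Qelt]
      apply Commute.sub_left
      · exact bg_Qelt (m + 1) n
      · apply Commute.smul_left
        apply Commute.sum_left
        intro k _
        apply Commute.smul_left
        exact (ih (m - k) (Nat.lt_succ_of_le (Nat.sub_le m k)) n).mul_left (bg_Qelt _ _)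

lemma Gsum (i j' : ℕ) :
    ∑ k ∈ range i, (if k ≤ j' then bg (j' - k) else 0) * ag (i - k)
      = ag i * bg j' - (if i ≤ j' then bg (j' - i) else 0) := by
  by_cases hij : i ≤ j'
  · rw [if_pos hij, ab_sum_HB i j', show min i j' = i from by omega,
      Finset.sum_range_succ, Nat.sub_self, ag_zero, mul_one, add_sub_cancel_right]
    exact Finset.sum_congr rfl fun k hk => by
      rw [if_pos (by simp at hk; omega)]
  · rw [if_neg hij, sub_zero, ab_sum_HB i j', show min i j' = j' from by omega]
    rw [← Finset.sum_subset (Finset.range_subset_range.mpr (by omega) :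
        range (j' + 1) ⊆ range i)
      (fun x _ hx => by rw [if_neg (by simp at hx; omega), zero_mul])]
    exact Finset.sum_congr rfl fun k hk => by rw [if_pos (by simp at hk; omega)]

lemma Pelt_bg : ∀ i : ℕ, 1 ≤ i → ∀ j : ℕ,
    Pelt i * bg j = bg j * Pelt i + (if i ≤ j then bg (j - i) else 0) := by
  intro i
  induction i using Nat.strong_induction_on with
  | _ i ih =>
    intro hi j
    match i, hi with
    | n + 1, _ =>
      match j with
      | 0 => simp
      | j' + 1 =>
        have hfront : ∑ k ∈ range n, Pelt (k + 1) * ag (n - k)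
            = ((n : ℂ) + 1) • ag (n + 1) - Pelt (n + 1) := by
          rw [Pelt_succ n, sub_sub_cancel]
        have hSc : ∑ k ∈ range n,
              Pelt (k + 1) * (if n - k = 0 then 0 else ag (n - k - 1) * bg j')
            = (n : ℂ) • (ag n * bg j') := by
          have hptw : ∀ k ∈ range n,
              Pelt (k + 1) * (if n - k = 0 then 0 else ag (n - k - 1) * bg j')
                = (Pelt (k + 1) * ag (n - 1 - k)) * bg j' := by
            intro k hk
            simp only [Finset.mem_range] at hk
            rw [if_neg (by omega), ← mul_assoc, show n - k - 1 = n - 1 - k from by omega]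
          rw [Finset.sum_congr rfl hptw, ← Finset.sum_mul, newtonP' n, smul_mul_assoc]
        calc Pelt (n + 1) * bg (j' + 1)
            = (((n : ℂ) + 1) • ag (n + 1)) * bg (j' + 1)
              - (∑ k ∈ range n, Pelt (k + 1) * ag (n - k)) * bg (j' + 1) := by
              rw [Pelt_succ n, sub_mul]
          _ = ((n : ℂ) + 1) • (bg (j' + 1) * ag (n + 1) + ag n * bg j')
              - ∑ k ∈ range n, Pelt (k + 1) * (ag (n - k) * bg (j' + 1)) := by
              rw [smul_mul_assoc, ab1_HB n j', Finset.sum_mul]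
              congr 1
              exact Finset.sum_congr rfl fun k _ => mul_assoc _ _ _
          _ = ((n : ℂ) + 1) • (bg (j' + 1) * ag (n + 1) + ag n * bg j')
              - ∑ k ∈ range n,
                  (bg (j' + 1) * (Pelt (k + 1) * ag (n - k))
                    + (if k ≤ j' then bg (j' - k) else 0) * ag (n - k)
                    + Pelt (k + 1) * (if n - k = 0 then 0 else ag (n - k - 1) * bg j')) := by
              congr 1
              refine Finset.sum_congr rfl fun k hk => ?_
              simp only [Finset.mem_range] at hk
              rw [ab1_HB' (n - k) j', mul_add, ← mul_assoc,
                ih (k + 1) (by omega) (by omega) (j' + 1)]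
              simp only [Nat.succ_sub_succ, Nat.add_le_add_iff_right]
              rw [add_mul, mul_assoc]
          _ = ((n : ℂ) + 1) • (bg (j' + 1) * ag (n + 1)) + ((n : ℂ) + 1) • (ag n * bg j')
              - (bg (j' + 1) * (((n : ℂ) + 1) • ag (n + 1) - Pelt (n + 1))
                + (ag n * bg j' - (if n ≤ j' then bg (j' - n) else 0))
                + (n : ℂ) • (ag n * bg j')) := by
              rw [smul_add, Finset.sum_add_distrib, Finset.sum_add_distrib, hSc, Gsum n j',
                ← Finset.mul_sum, hfront]
          _ = bg (j' + 1) * Pelt (n + 1) + (if n + 1 ≤ j' + 1 then bg ((j' + 1) - (n + 1)) else 0) := by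
              simp only [Nat.succ_sub_succ, Nat.add_le_add_iff_right]
              rw [mul_sub, mul_smul_comm]
              by_cases hnj : n ≤ j'
              · module
              · module

lemma Pelt_Qelt : ∀ j : ℕ, 1 ≤ j → ∀ i : ℕ, 1 ≤ i →
    Pelt i * Qelt j = Qelt j * Pelt i + (if i = j then 1 else 0) := by
  intro j
  induction j using Nat.strong_induction_on with
  | _ j ih =>
    intro hj i hi
    match j, hj with
    | n + 1, _ =>
      obtain ⟨i', rfl⟩ : ∃ iZ, i = iZ + 1 := ⟨i - 1, by omega⟩
      set i := i' + 1 with hidef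
      have hS2 : ∑ k ∈ range n,
            ((k : ℂ) + 1) • (Qelt (k + 1) * (if i ≤ n - k then bg ((n - k) - i) else 0))
          = if i ≤ n then (((n - i : ℕ) : ℂ) + 1) • bg ((n - i) + 1) else 0 := by
        by_cases hin : i ≤ n
        · rw [if_pos hin, ← newtonQ (n - i)]
          rw [← Finset.sum_subset (Finset.range_subset_range.mpr (by omega) :
              range (n - i + 1) ⊆ range n)
            (fun x _ hx => by
              rw [if_neg (fun hc => by simp at hx; omega), mul_zero, smul_zero])]
          refine Finset.sum_congr rfl fun k hk => ?_
          simp only [Finset.mem_range] at hk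
          have hg : i ≤ n - k := by omega
          rw [if_pos hg, show (n - k) - i = (n - i) - k from by omega]
        · rw [if_neg hin]
          apply Finset.sum_eq_zero
          intro k hk
          rw [if_neg (by omega), mul_zero, smul_zero]
      have hS3 : ∑ k ∈ range n,
            ((k : ℂ) + 1) • ((if i = k + 1 then (1 : HB) else 0) * bg (n - k))
          = if i ≤ n then (i : ℂ) • bg ((n - i) + 1) else 0 := by
        simp only [ite_mul, one_mul, zero_mul, smul_ite, smul_zero]
        by_cases hin : i ≤ n
        · rw [if_pos hin, Finset.sum_eq_single i'
              (fun b _ hb => by rw [if_neg (fun hc => hb (by omega))])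
              (fun h => absurd (by simp only [Finset.mem_range]; omega : i' ∈ range n) h),
            if_pos hidef, show n - i' = (n - i) + 1 from by omega]
          congr 1
          rw [hidef]
          push_cast
          ring
        · rw [if_neg hin]
          apply Finset.sum_eq_zero
          intro k hk
          rw [if_neg (fun hc => by simp only [Finset.mem_range] at hk; omega)]
      have hptw : ∀ k ∈ range n,
          ((k : ℂ) + 1) • (Pelt i * (Qelt (k + 1) * bg (n - k)))
            = ((k : ℂ) + 1) • (Qelt (k + 1) * (bg (n - k) * Pelt i))
              + ((k : ℂ) + 1) • (Qelt (k + 1) * (if i ≤ n - k then bg ((n - k) - i) else 0))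
              + ((k : ℂ) + 1) • ((if i = k + 1 then (1 : HB) else 0) * bg (n - k)) := by
        intro k hk
        simp only [Finset.mem_range] at hk
        rw [← mul_assoc, ih (k + 1) (by omega) (by omega) i hi, add_mul, mul_assoc,
          Pelt_bg i hi (n - k), mul_add, smul_add, smul_add]
      have h2 : Qelt (n + 1) * Pelt i
          = bg (n + 1) * Pelt i - ((n : ℂ) + 1)⁻¹ •
              ∑ k ∈ range n, ((k : ℂ) + 1) • (Qelt (k + 1) * (bg (n - k) * Pelt i)) := by
        rw [Qelt_succ, sub_mul, smul_mul_assoc, Finset.sum_mul]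
        congr 2
        exact Finset.sum_congr rfl fun k _ => by rw [smul_mul_assoc, mul_assoc]
      have hexp : Pelt i * Qelt (n + 1)
          = (bg (n + 1) * Pelt i - ((n : ℂ) + 1)⁻¹ •
              ∑ k ∈ range n, ((k : ℂ) + 1) • (Qelt (k + 1) * (bg (n - k) * Pelt i)))
            + ((if i ≤ n + 1 then bg ((n + 1) - i) else 0)
              - ((n : ℂ) + 1)⁻¹ •
                ((if i ≤ n then (((n - i : ℕ) : ℂ) + 1) • bg ((n - i) + 1) else 0)
                  + (if i ≤ n then (i : ℂ) • bg ((n - i) + 1) else 0))) := by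
        calc Pelt i * Qelt (n + 1)
            = Pelt i * bg (n + 1) - ((n : ℂ) + 1)⁻¹ •
                ∑ k ∈ range n, ((k : ℂ) + 1) • (Pelt i * (Qelt (k + 1) * bg (n - k))) := by
              rw [Qelt_succ, mul_sub, mul_smul_comm, Finset.mul_sum]
              congr 2
              exact Finset.sum_congr rfl fun k _ => mul_smul_comm _ _ _
          _ = (bg (n + 1) * Pelt i + (if i ≤ n + 1 then bg ((n + 1) - i) else 0))
              - ((n : ℂ) + 1)⁻¹ •
                (∑ k ∈ range n, ((k : ℂ) + 1) • (Qelt (k + 1) * (bg (n - k) * Pelt i))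
                  + ((if i ≤ n then (((n - i : ℕ) : ℂ) + 1) • bg ((n - i) + 1) else 0)
                    + (if i ≤ n then (i : ℂ) • bg ((n - i) + 1) else 0))) := by
              rw [Pelt_bg i hi (n + 1), Finset.sum_congr rfl hptw,
                Finset.sum_add_distrib, Finset.sum_add_distrib, hS2, hS3, add_assoc]
          _ = _ := by module
      rw [hexp, ← h2]
      congr 1
      by_cases hin : i ≤ n
      · rw [if_pos (by omega : i ≤ n + 1), if_pos hin, if_pos hin, if_neg (by omega : ¬ i = n + 1),
          ← add_smul, smul_smul,
          show ((n - i : ℕ) : ℂ) + 1 + (i : ℂ) = (n : ℂ) + 1 from by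
            push_cast [Nat.cast_sub (by omega : i ≤ n)]; ring,
          inv_mul_cancel₀ (cast_succ_ne_zero n), one_smul,
          show (n + 1) - i = (n - i) + 1 from by omega]
        exact sub_self _
      · by_cases hin2 : i = n + 1
        · rw [if_pos (by omega : i ≤ n + 1), if_neg hin, if_neg hin, if_pos hin2]
          simp [hin2]
        · rw [if_neg (by omega : ¬ i ≤ n + 1), if_neg hin, if_neg hin, if_neg hin2]
          simp

/-! ### The homomorphisms -/

def fPsi : HpGen → HA := Sum.elim (fun i : ℕ+ => Aelt i) (fun i : ℕ+ => Belt i)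
def fPhi : HGen → HB := Sum.elim (fun i : ℕ+ => Pelt i) (fun i : ℕ+ => Qelt i)

lemma liftPsi_aGen (n : ℕ) : FreeAlgebra.lift ℂ fPsi (aGen n) = Aelt n := by
  cases n with
  | zero => rw [aGen, dif_neg (lt_irrefl 0), map_one, Aelt_zero]
  | succ m =>
    rw [aGen, dif_pos (Nat.succ_pos m), FreeAlgebra.lift_ι_apply]
    rfl

lemma liftPsi_bGen (n : ℕ) : FreeAlgebra.lift ℂ fPsi (bGen n) = Belt n := by
  cases n with
  | zero => rw [bGen, dif_neg (lt_irrefl 0), map_one, Belt_zero]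
  | succ m =>
    rw [bGen, dif_pos (Nat.succ_pos m), FreeAlgebra.lift_ι_apply]
    rfl

lemma hPsi : ∀ ⦃x y⦄, relHp x y → FreeAlgebra.lift ℂ fPsi x = FreeAlgebra.lift ℂ fPsi y := by
  intro x y h
  cases h with
  | aa i j => simp only [map_mul, liftPsi_aGen]; exact Aelt_Aelt _ _
  | bb i j => simp only [map_mul, liftPsi_bGen]; exact Belt_Belt _ _
  | ab i j =>
    simp only [map_mul, map_sum, liftPsi_aGen, liftPsi_bGen]
    exact AB_sum _ _

lemma hPhi : ∀ ⦃x y⦄, relH x y → FreeAlgebra.lift ℂ fPhi x = FreeAlgebra.lift ℂ fPhi y := by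
  intro x y h
  cases h with
  | pp i j =>
    simp only [pGen, map_mul, FreeAlgebra.lift_ι_apply]
    exact Pelt_Pelt _ _
  | qq i j =>
    simp only [qGen, map_mul, FreeAlgebra.lift_ι_apply]
    exact Qelt_Qelt _ _
  | pq i j =>
    have e1 : FreeAlgebra.lift ℂ fPhi (pGen i) = Pelt (i : ℕ) := by
      rw [pGen, FreeAlgebra.lift_ι_apply]; rfl
    have e2 : FreeAlgebra.lift ℂ fPhi (qGen j) = Qelt (j : ℕ) := by
      rw [qGen, FreeAlgebra.lift_ι_apply]; rfl
    simp only [map_mul, map_add, e1, e2]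
    rw [Pelt_Qelt (j : ℕ) j.2 (i : ℕ) i.2]
    congr 1
    by_cases h : i = j
    · subst h; simp
    · simp [PNat.coe_inj, h]

noncomputable def PsiAlg : HB →ₐ[ℂ] HA :=
  RingQuot.liftAlgHom ℂ ⟨FreeAlgebra.lift ℂ fPsi, hPsi⟩

noncomputable def PhiAlg : HA →ₐ[ℂ] HB :=
  RingQuot.liftAlgHom ℂ ⟨FreeAlgebra.lift ℂ fPhi, hPhi⟩

lemma Psi_ag (n : ℕ) : PsiAlg (ag n) = Aelt n := by
  rw [ag, PsiAlg, RingQuot.liftAlgHom_mkAlgHom_apply, liftPsi_aGen]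

lemma Psi_bg (n : ℕ) : PsiAlg (bg n) = Belt n := by
  rw [bg, PsiAlg, RingQuot.liftAlgHom_mkAlgHom_apply, liftPsi_bGen]

lemma Phi_pg (i : ℕ+) : PhiAlg (pg i) = Pelt i := by
  rw [pg, PhiAlg, RingQuot.liftAlgHom_mkAlgHom_apply, pGen, FreeAlgebra.lift_ι_apply]
  rfl

lemma Phi_qg (i : ℕ+) : PhiAlg (qg i) = Qelt i := by
  rw [qg, PhiAlg, RingQuot.liftAlgHom_mkAlgHom_apply, qGen, FreeAlgebra.lift_ι_apply]
  rfl

lemma Phi_pS (k : ℕ) : PhiAlg (pS k) = Pelt (k + 1) := Phi_pg _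
lemma Phi_qS (k : ℕ) : PhiAlg (qS k) = Qelt (k + 1) := Phi_qg _

lemma Phi_Aelt : ∀ n, PhiAlg (Aelt n) = ag n := by
  intro n
  induction n using Nat.strong_induction_on with
  | _ n ih =>
    match n with
    | 0 => rw [Aelt_zero, map_one, ag_zero]
    | n + 1 =>
      rw [Aelt, map_smul, map_sum]
      have : ∀ k ∈ range (n + 1), PhiAlg (pS k * Aelt (n - k)) = Pelt (k + 1) * ag (n - k) := by
        intro k _
        rw [map_mul, Phi_pS, ih (n - k) (Nat.lt_succ_of_le (Nat.sub_le n k))]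
      rw [Finset.sum_congr rfl this, newtonP n, smul_smul,
        inv_mul_cancel₀ (cast_succ_ne_zero n), one_smul]

lemma Phi_Belt : ∀ n, PhiAlg (Belt n) = bg n := by
  intro n
  induction n using Nat.strong_induction_on with
  | _ n ih =>
    match n with
    | 0 => rw [Belt_zero, map_one, bg_zero]
    | n + 1 =>
      rw [Belt, map_smul, map_sum]
      have : ∀ k ∈ range (n + 1),
          PhiAlg (((k : ℂ) + 1) • (qS k * Belt (n - k)))
            = ((k : ℂ) + 1) • (Qelt (k + 1) * bg (n - k)) := by
        intro k _
        rw [map_smul, map_mul, Phi_qS, ih (n - k) (Nat.lt_succ_of_le (Nat.sub_le n k))]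
      rw [Finset.sum_congr rfl this, newtonQ n, smul_smul,
        inv_mul_cancel₀ (cast_succ_ne_zero n), one_smul]

lemma Psi_Pelt : ∀ n, PsiAlg (Pelt (n + 1)) = pS n := by
  intro n
  induction n using Nat.strong_induction_on with
  | _ n ih =>
    rw [Pelt_succ n, map_sub, map_smul, Psi_ag, map_sum]
    have : ∀ k ∈ range n, PsiAlg (Pelt (k + 1) * ag (n - k)) = pS k * Aelt (n - k) := by
      intro k hk
      simp only [Finset.mem_range] at hk
      rw [map_mul, ih k hk, Psi_ag]
    rw [Finset.sum_congr rfl this,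
      show ∑ k ∈ range n, pS k * Aelt (n - k)
        = ((n : ℂ) + 1) • Aelt (n + 1) - pS n from by
          rw [← newtonA n, Finset.sum_range_succ, Nat.sub_self, Aelt_zero, mul_one,
            add_sub_cancel_right],
      sub_sub_cancel]

lemma Psi_Qelt : ∀ n, PsiAlg (Qelt (n + 1)) = qS n := by
  intro n
  induction n using Nat.strong_induction_on with
  | _ n ih =>
    rw [Qelt_succ n, map_sub, map_smul, Psi_bg, map_sum]
    have : ∀ k ∈ range n,
        PsiAlg (((k : ℂ) + 1) • (Qelt (k + 1) * bg (n - k)))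
          = ((k : ℂ) + 1) • (qS k * Belt (n - k)) := by
      intro k hk
      simp only [Finset.mem_range] at hk
      rw [map_smul, map_mul, ih k hk, Psi_bg]
    rw [Finset.sum_congr rfl this,
      show ∑ k ∈ range n, ((k : ℂ) + 1) • (qS k * Belt (n - k))
        = ((n : ℂ) + 1) • Belt (n + 1) - ((n : ℂ) + 1) • (qS n * Belt 0) from by
          rw [← newtonB n, Finset.sum_range_succ, Nat.sub_self, add_sub_cancel_right],
      smul_sub, smul_smul, inv_mul_cancel₀ (cast_succ_ne_zero n), one_smul,
      Belt_zero, mul_one, sub_sub_cancel, smul_smul,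
      inv_mul_cancel₀ (cast_succ_ne_zero n), one_smul]

lemma aGen_coe (i : ℕ+) : aGen (i : ℕ) = ι ℂ (Sum.inl i : HpGen) := by
  obtain ⟨n, hn⟩ := i
  show aGen n = ι ℂ (Sum.inl ⟨n, hn⟩)
  rw [aGen, dif_pos hn]

lemma bGen_coe (i : ℕ+) : bGen (i : ℕ) = ι ℂ (Sum.inr i : HpGen) := by
  obtain ⟨n, hn⟩ := i
  show bGen n = ι ℂ (Sum.inr ⟨n, hn⟩)
  rw [bGen, dif_pos hn]

lemma mk_iota_inl (i : ℕ+) :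
    RingQuot.mkAlgHom ℂ relHp (ι ℂ (Sum.inl i : HpGen)) = ag (i : ℕ) := by
  rw [ag, aGen_coe]

lemma mk_iota_inr (i : ℕ+) :
    RingQuot.mkAlgHom ℂ relHp (ι ℂ (Sum.inr i : HpGen)) = bg (i : ℕ) := by
  rw [bg, bGen_coe]

lemma Psi_Pelt' (i : ℕ+) : PsiAlg (Pelt (i : ℕ)) = pg i := by
  obtain ⟨n, hn⟩ : ∃ n, (i : ℕ) = n + 1 := ⟨(i : ℕ) - 1, (Nat.succ_pred_eq_of_pos i.2).symm⟩
  rw [hn, Psi_Pelt n, pS]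
  congr 1
  exact Subtype.ext hn.symm

lemma Psi_Qelt' (i : ℕ+) : PsiAlg (Qelt (i : ℕ)) = qg i := by
  obtain ⟨n, hn⟩ : ∃ n, (i : ℕ) = n + 1 := ⟨(i : ℕ) - 1, (Nat.succ_pred_eq_of_pos i.2).symm⟩
  rw [hn, Psi_Qelt n, qS]
  congr 1
  exact Subtype.ext hn.symm

noncomputable def theEquiv : HA ≃ₐ[ℂ] HB := by
  refine AlgEquiv.ofAlgHom PhiAlg PsiAlg ?_ ?_
  · apply RingQuot.ringQuot_ext'
    apply FreeAlgebra.hom_ext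
    funext x
    cases x with
    | inl i =>
      simp only [Function.comp_apply, AlgHom.coe_comp, mk_iota_inl]
      rw [Psi_ag, Phi_Aelt]
      rfl
    | inr i =>
      simp only [Function.comp_apply, AlgHom.coe_comp, mk_iota_inr]
      rw [Psi_bg, Phi_Belt]
      rfl
  · apply RingQuot.ringQuot_ext'
    apply FreeAlgebra.hom_ext
    funext x
    cases x with
    | inl i =>
      simp only [Function.comp_apply, AlgHom.coe_comp]
      show PsiAlg (PhiAlg (RingQuot.mkAlgHom ℂ relH (pGen i))) = RingQuot.mkAlgHom ℂ relH (pGen i)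
      rw [show RingQuot.mkAlgHom ℂ relH (pGen i) = pg i from rfl, Phi_pg, Psi_Pelt']
    | inr i =>
      simp only [Function.comp_apply, AlgHom.coe_comp]
      show PsiAlg (PhiAlg (RingQuot.mkAlgHom ℂ relH (qGen i))) = RingQuot.mkAlgHom ℂ relH (qGen i)
      rw [show RingQuot.mkAlgHom ℂ relH (qGen i) = qg i from rfl, Phi_qg, Psi_Qelt']
end

end HeisenAux

/-- The algebra `H` (the quotient of the universal enveloping
algebra of the infinite-dimensional Heisenberg Lie algebra by `c = 1`,
presented by generators `p_i, q_i` with relations `p_i p_j = p_j p_i`,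
`q_i q_j = q_j q_i`, `p_i q_j = q_j p_i + δ_{ij}`) is isomorphic to the algebra
`H'` presented by generators `a_i, b_i` with relations `a_i a_j = a_j a_i`,
`b_i b_j = b_j b_i`, `a_i b_j = Σ_{k=0}^{min(i,j)} b_{j-k} a_{i-k}`. -/
theorem heisenberg_presentations_isomorphic :
    Nonempty (RingQuot relH ≃ₐ[ℂ] RingQuot relHp) := by
  exact ⟨HeisenAux.theEquiv⟩
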